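/- arXiv:1109.4697 — 3 statements merged into one kernel-verified Lean document; each statement's English description precedes it below -/
import Mathlib

section
/- Let G be a locally profinite group, P a closed subgroup, and K0 a compact open subgroup such that G = P·K0 (Iwasawa decomposition). Then for any smooth representation W of P, the restriction map Ind_P^G(W) → Ind_{P ∩ K0}^{K0}(W) is an isomorphism of K0-representations. -/
/-- `f : G → W` lies in the smooth (un-normalized) induction `Ind_P^G W` of the
representation `ρ` of `P`: it is left `P`-equivariant and smooth (right-invariant under some
open subgroup). -/
def IsSmoothInd {k G W : Type*} [Field k] [Group G] [TopologicalSpace G]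
    [AddCommGroup W] [Module k W] (P : Subgroup G)
    (ρ : Representation k ↥P W) (f : G → W) : Prop :=
  (∀ (q : ↥P) (g : G), f ((q : G) * g) = ρ q (f g)) ∧
    ∃ U : Subgroup G, IsOpen (U : Set G) ∧ ∀ u ∈ U, ∀ g : G, f (g * u) = f g

/-- `h : K0 → W` lies in the smooth induction `Ind_{P ∩ K0}^{K0} W`. -/
def IsSmoothIndK0 {k G W : Type*} [Field k] [Group G] [TopologicalSpace G]
    [AddCommGroup W] [Module k W] (P K0 : Subgroup G)
    (ρ : Representation k ↥P W) (h : ↥K0 → W) : Prop :=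
  (∀ (u : ↥K0) (hu : (u : G) ∈ P) (x : ↥K0), h (u * x) = ρ ⟨(u : G), hu⟩ (h x)) ∧
    ∃ U : Subgroup G, IsOpen (U : Set G) ∧ ∀ (u : ↥K0), (u : G) ∈ U → ∀ x : ↥K0, h (x * u) = h x

/-- Let `G` be a locally profinite group, `P` a closed subgroup and `K0` a
compact open subgroup with `G = P·K0` (Iwasawa decomposition).  Then for any smooth
representation `W` of `P`, restriction of functions gives an isomorphism of
`K0`-representations `Ind_P^G W ≅ Ind_{P ∩ K0}^{K0} W`; here we assert that the restriction
map is bijective, i.e. that there is an equivalence given by `f ↦ f|_{K0}`. -/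
theorem stmt8 (k G W : Type*) [Field k] [Group G] [TopologicalSpace G] [IsTopologicalGroup G]
    [LocallyCompactSpace G] [TotallyDisconnectedSpace G]
    [AddCommGroup W] [Module k W]
    (P : Subgroup G) (hP : IsClosed (P : Set G))
    (K0 : Subgroup G) (hK0open : IsOpen (K0 : Set G)) (hK0cpt : IsCompact (K0 : Set G))
    (ρ : Representation k ↥P W)
    (hsmooth : ∀ w : W, ∃ U : Subgroup G, IsOpen (U : Set G) ∧
      ∀ u : ↥P, (u : G) ∈ U → ρ u w = w)
    (hIwasawa : ∀ g : G, ∃ q ∈ P, ∃ c ∈ K0, g = q * c) :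
    ∃ e : {f : G → W // IsSmoothInd P ρ f} ≃ {h : ↥K0 → W // IsSmoothIndK0 P K0 ρ h},
      ∀ (f : {f : G → W // IsSmoothInd P ρ f}) (x : ↥K0),
        (e f : ↥K0 → W) x = (f : G → W) (x : G) := by
  
  classical
  choose q hq c hc hgdec using hIwasawa
  -- well-definedness of the extension
  have key : ∀ (h : ↥K0 → W),
      (∀ (u : ↥K0) (hu : (u : G) ∈ P) (x : ↥K0), h (u * x) = ρ ⟨(u : G), hu⟩ (h x)) →
      ∀ (q₁ : ↥P) (c₁ : ↥K0) (q₂ : ↥P) (c₂ : ↥K0), (q₁ : G) * c₁ = (q₂ : G) * c₂ →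
      ρ q₁ (h c₁) = ρ q₂ (h c₂) := by
    intro h h1 q₁ c₁ q₂ c₂ heq
    have hm : (q₂ : G)⁻¹ * q₁ = (c₂ : G) * (c₁ : G)⁻¹ := by
      rw [eq_mul_inv_iff_mul_eq, mul_assoc, inv_mul_eq_iff_eq_mul, heq]
    have huP : ((c₂ * c₁⁻¹ : ↥K0) : G) ∈ P := by
      show ((c₂ : G) * (c₁ : G)⁻¹) ∈ P
      rw [← hm]; exact mul_mem (inv_mem q₂.2) q₁.2
    have h3 := h1 (c₂ * c₁⁻¹) huP c₁
    have hc2 : c₂ * c₁⁻¹ * c₁ = c₂ := by group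
    rw [hc2] at h3
    have hPeq : (⟨((c₂ * c₁⁻¹ : ↥K0) : G), huP⟩ : ↥P) = q₂⁻¹ * q₁ := by
      ext; show (c₂ : G) * (c₁ : G)⁻¹ = _; rw [← hm]; rfl
    rw [h3, hPeq, ← Module.End.mul_apply, ← map_mul, mul_inv_cancel_left]
  -- extension map
  set F : (↥K0 → W) → (G → W) := fun h g => ρ ⟨q g, hq g⟩ (h ⟨c g, hc g⟩) with hF
  have Fspec : ∀ (h : ↥K0 → W),
      (∀ (u : ↥K0) (hu : (u : G) ∈ P) (x : ↥K0), h (u * x) = ρ ⟨(u : G), hu⟩ (h x)) →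
      ∀ (g : G) (q₀ : ↥P) (c₀ : ↥K0), g = (q₀ : G) * c₀ → F h g = ρ q₀ (h c₀) := by
    intro h h1 g q₀ c₀ hg
    exact key h h1 ⟨q g, hq g⟩ ⟨c g, hc g⟩ q₀ c₀ (by rw [← hg]; exact (hgdec g).symm)
  have Fmem : ∀ (h : {h : ↥K0 → W // IsSmoothIndK0 P K0 ρ h}), IsSmoothInd P ρ (F h) := by
    rintro ⟨h, h1, U, hUopen, h2⟩
    constructor
    · intro p g
      have e1 : F h ((p : G) * g) = ρ (p * ⟨q g, hq g⟩) (h ⟨c g, hc g⟩) := by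
        apply Fspec h h1
        show (p : G) * g = (p : G) * (q g) * (c g)
        rw [mul_assoc, ← hgdec g]
      rw [e1, map_mul]
      rfl
    · refine ⟨U ⊓ K0, hUopen.inter hK0open, ?_⟩
      rintro u ⟨huU, huK⟩ g
      have e1 : F h (g * u) = ρ ⟨q g, hq g⟩ (h (⟨c g, hc g⟩ * ⟨u, huK⟩)) := by
        apply Fspec h h1
        show g * u = (q g) * ((c g) * u)
        rw [← mul_assoc, ← hgdec g]
      rw [e1, h2 ⟨u, huK⟩ huU]
  have Frest : ∀ (h : {h : ↥K0 → W // IsSmoothIndK0 P K0 ρ h}) (x : ↥K0),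
      F h (x : G) = (h : ↥K0 → W) x := by
    rintro ⟨h, h1, _⟩ x
    have := Fspec h h1 (x : G) 1 x (by simp)
    rwa [map_one, Module.End.one_apply] at this
  -- restriction map
  have Rmem : ∀ (f : {f : G → W // IsSmoothInd P ρ f}),
      IsSmoothIndK0 P K0 ρ (fun x : ↥K0 => (f : G → W) (x : G)) := by
    rintro ⟨f, f1, U, hUopen, f2⟩
    constructor
    · intro u hu x
      show f ((u : G) * (x : G)) = ρ ⟨(u : G), hu⟩ (f (x : G))
      exact f1 ⟨(u : G), hu⟩ (x : G)
    · exact ⟨U, hUopen, fun u hu x => f2 (u : G) hu (x : G)⟩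
  refine ⟨{
    toFun := fun f => ⟨fun x => (f : G → W) (x : G), Rmem f⟩
    invFun := fun h => ⟨F h, Fmem h⟩
    left_inv := ?_
    right_inv := ?_ }, fun f x => rfl⟩
  · rintro ⟨f, f1, hf2⟩
    ext g
    show F (fun x : ↥K0 => f (x : G)) g = f g
    simp only [hF]
    rw [← f1 ⟨q g, hq g⟩ (c g), ← hgdec g]
  · rintro ⟨h, hmem⟩
    ext x
    exact Frest ⟨h, hmem⟩ x
end

section
/- Let X be a spectral topological space and U ⊆ X a quasi-compact open subset. Then the closure of U in X is exactly the set of specializations of points of U; that is, x ∈ cl(U) if and only if there exists u ∈ U with x in the closure of {u}. -/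
/-- Let `X` be a spectral topological space (quasi-compact, sober, with a
basis of quasi-compact opens that is stable under intersection) and `U ⊆ X` a quasi-compact
open subset.  Then the closure of `U` in `X` is exactly the set of specializations of points
of `U`: `x ∈ cl(U)` iff there exists `u ∈ U` with `x ∈ closure {u}` (i.e. `u ⤳ x`). -/
theorem stmt10 (X : Type*) [TopologicalSpace X]
    [CompactSpace X] [QuasiSober X] [T0Space X] [QuasiSeparatedSpace X]
    (hbasis : TopologicalSpace.IsTopologicalBasis {U : Set X | IsOpen U ∧ IsCompact U})
    (U : Set X) (hUopen : IsOpen U) (hUcpt : IsCompact U) :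
    closure U = {x : X | ∃ u ∈ U, u ⤳ x} := by
  ext x
  simp only [Set.mem_setOf_eq]
  constructor
  · intro hx
    -- the collection of closed sets meeting `V ∩ U` for every quasi-compact open `V ∋ x`
    set S : Set (Set X) :=
      {Z | IsClosed Z ∧ ∀ V : Set X, IsOpen V → IsCompact V → x ∈ V → (Z ∩ (V ∩ U)).Nonempty}
      with hS
    have hUniv : (Set.univ : Set X) ∈ S := by
      refine ⟨isClosed_univ, fun V hVo hVc hxV => ?_⟩
      obtain ⟨y, hyV, hyU⟩ := mem_closure_iff.mp hx V hVo hxV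
      exact ⟨y, Set.mem_univ y, hyV, hyU⟩
    -- Zorn: a minimal element of S
    have hchain : ∀ c ⊆ S, IsChain (· ⊆ ·) c → c.Nonempty →
        ∃ lb ∈ S, ∀ s ∈ c, lb ⊆ s := by
      rintro c hcS hc ⟨c₀, hc₀⟩
      refine ⟨⋂₀ c, ⟨isClosed_sInter fun Z hZ => (hcS hZ).1, fun V hVo hVc hxV => ?_⟩,
        fun s hs => Set.sInter_subset_of_mem hs⟩
      have hVU : IsCompact (V ∩ U) := QuasiSeparatedSpace.inter_isCompact V U hVo hVc hUopen hUcpt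
      have hdir : Directed (· ≤ ·) (fun i : c => OrderDual.toDual i.1) := by
        intro i j
        rcases hc.total i.2 j.2 with h | h
        · exact ⟨i, le_refl _, h⟩
        · exact ⟨j, h, le_refl _⟩
      have key : ((V ∩ U) ∩ ⋂ i : c, i.1).Nonempty := by
        have : Nonempty c := ⟨⟨c₀, hc₀⟩⟩
        refine IsCompact.inter_iInter_nonempty hVU (fun i : c => i.1)
          (fun i => (hcS i.2).1) (fun u => ?_)
        obtain ⟨z, hz⟩ := hdir.finset_le u
        have hzS : z.1 ∈ S := hcS z.2
        obtain ⟨y, hyz, hyVU⟩ := hzS.2 V hVo hVc hxV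
        exact ⟨y, hyVU, Set.mem_biInter fun i hi => hz i hi hyz⟩
      obtain ⟨y, hyVU, hy⟩ := key
      exact ⟨y, Set.mem_sInter.mpr fun Z hZ => Set.mem_iInter.mp hy ⟨Z, hZ⟩, hyVU⟩
    obtain ⟨Z, -, hmin⟩ := zorn_superset_nonempty S hchain Set.univ hUniv
    obtain ⟨hZS, hZmin⟩ : Z ∈ S ∧ ∀ a ∈ S, a ⊆ Z → Z ⊆ a :=
      ⟨hmin.prop, fun a ha hsub => hmin.le_of_le ha hsub⟩
    obtain ⟨hZcl, hZP⟩ := hZS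
    -- Z is nonempty
    have hZU : (Z ∩ U).Nonempty := by
      obtain ⟨y, hyZ, _, hyU⟩ := hZP Set.univ isOpen_univ isCompact_univ (Set.mem_univ x)
      exact ⟨y, hyZ, hyU⟩
    have hZne : Z.Nonempty := ⟨hZU.choose, hZU.choose_spec.1⟩
    -- x ∈ Z
    have hxZ : x ∈ Z := by
      rw [← hZcl.closure_eq]
      rw [mem_closure_iff]
      intro W hWo hxW
      obtain ⟨V, ⟨hVo, hVc⟩, hxV, hVW⟩ := hbasis.exists_subset_of_mem_open hxW hWo
      obtain ⟨y, hyZ, hyV, _⟩ := hZP V hVo hVc hxV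
      exact ⟨y, hVW hyV, hyZ⟩
    -- Z is irreducible
    have hZirr : IsIrreducible Z := by
      refine ⟨hZne, fun u v huo hvo hu hv => ?_⟩
      by_contra hcon
      rw [Set.not_nonempty_iff_eq_empty] at hcon
      -- Z ⊆ uᶜ ∪ vᶜ; one of Z ∩ uᶜ, Z ∩ vᶜ is in S
      have hcase : Z ∩ uᶜ ∈ S ∨ Z ∩ vᶜ ∈ S := by
        by_contra h
        push_neg at h
        obtain ⟨h1, h2⟩ := h
        simp only [hS, Set.mem_setOf_eq, not_and, not_forall] at h1 h2
        obtain ⟨V1, hV1o, hV1c, hxV1, hZe1⟩ := h1 (hZcl.inter (isClosed_compl_iff.mpr huo))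
        obtain ⟨V2, hV2o, hV2c, hxV2, hZe2⟩ := h2 (hZcl.inter (isClosed_compl_iff.mpr hvo))
        rw [Set.not_nonempty_iff_eq_empty] at hZe1 hZe2
        have hVo : IsOpen (V1 ∩ V2) := hV1o.inter hV2o
        have hVc : IsCompact (V1 ∩ V2) :=
          QuasiSeparatedSpace.inter_isCompact V1 V2 hV1o hV1c hV2o hV2c
        obtain ⟨y, hyZ, ⟨hyV1, hyV2⟩, hyU⟩ := hZP (V1 ∩ V2) hVo hVc ⟨hxV1, hxV2⟩
        -- y ∈ Z ⊆ uᶜ ∪ vᶜ since Z ∩ (u ∩ v) = ∅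
        have hyuv : y ∉ u ∩ v := fun h => Set.eq_empty_iff_forall_notMem.mp hcon y ⟨hyZ, h⟩
        rcases Classical.em (y ∈ u) with hyu | hyu
        · have : y ∈ Z ∩ vᶜ ∩ (V2 ∩ U) :=
            ⟨⟨hyZ, fun hv' => hyuv ⟨hyu, hv'⟩⟩, hyV2, hyU⟩
          exact Set.eq_empty_iff_forall_notMem.mp hZe2 y this
        · have : y ∈ Z ∩ uᶜ ∩ (V1 ∩ U) := ⟨⟨hyZ, hyu⟩, hyV1, hyU⟩
          exact Set.eq_empty_iff_forall_notMem.mp hZe1 y this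
      rcases hcase with hmem | hmem
      · have := hZmin _ hmem Set.inter_subset_left
        obtain ⟨y, hyZ, hyu⟩ := hu
        exact (this hyZ).2 hyu
      · have := hZmin _ hmem Set.inter_subset_left
        obtain ⟨y, hyZ, hyv⟩ := hv
        exact (this hyZ).2 hyv
    -- generic point
    obtain ⟨u, hu⟩ := QuasiSober.sober hZirr hZcl
    have huZ : u ∈ Z := hu ▸ subset_closure rfl
    refine ⟨u, ?_, ?_⟩
    · -- u ∈ U since U is open and meets Z = closure {u}
      obtain ⟨y, hyZ, hyU⟩ := hZU
      have : y ∈ closure ({u} : Set X) := hu.symm ▸ hyZ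
      obtain ⟨z, hzU, hz⟩ := mem_closure_iff.mp this U hUopen hyU
      rwa [Set.mem_singleton_iff.mp hz] at hzU
    · rw [specializes_iff_mem_closure, hu]
      exact hxZ
  · rintro ⟨u, huU, hspec⟩
    exact closure_mono (Set.singleton_subset_iff.mpr huU)
      (specializes_iff_mem_closure.mp hspec)
end

section
/- Let G be a locally profinite group and P a closed subgroup such that G/P is compact, and suppose W is a smooth representation of P such that Ind_P^G(W) is admissible. Then W is an admissible representation of P. -/
open Pointwise Set

/-- Variant of `TopologicalGroup.exist_mul_closure_nhd` for a compact open set `W`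
in a (not necessarily compact) topological group. -/
private lemma exist_mul_closure_nhd' {G : Type*} [Group G] [TopologicalSpace G]
    [IsTopologicalGroup G] {W : Set G} (Wcpt : IsCompact W) (Wopen : IsOpen W) :
    ∃ T ∈ nhds (1 : G), W * T ⊆ W := by
  apply Wcpt.induction_on (p := fun S ↦ ∃ T ∈ nhds (1 : G), S * T ⊆ W)
    ⟨Set.univ, by simp only [Filter.univ_mem, Set.empty_mul, Set.empty_subset, and_self]⟩
    (fun _ _ huv ⟨T, hT, mem⟩ ↦ ⟨T, hT, (Set.mul_subset_mul_right huv).trans mem⟩)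
    (fun U V ⟨T₁, hT₁, mem1⟩ ⟨T₂, hT₂, mem2⟩ ↦ ⟨T₁ ∩ T₂, Filter.inter_mem hT₁ hT₂, by
      rw [Set.union_mul]
      exact Set.union_subset ((Set.mul_subset_mul_left Set.inter_subset_left).trans mem1)
        ((Set.mul_subset_mul_left Set.inter_subset_right).trans mem2)⟩)
  intro x memW
  have : (x, 1) ∈ (fun p : G × G ↦ p.1 * p.2) ⁻¹' W := by simp [memW]
  rcases isOpen_prod_iff.mp (continuous_mul.isOpen_preimage W Wopen) x 1 this with
    ⟨U, V, Uopen, Vopen, xmemU, onememV, prodsub⟩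
  have h6 : U * V ⊆ W := Set.mul_subset_iff.mpr (fun _ hx _ hy ↦ prodsub (Set.mk_mem_prod hx hy))
  exact ⟨U ∩ W, ⟨U, Uopen.mem_nhds xmemU, W, fun _ a ↦ a, rfl⟩,
    V, Vopen.mem_nhds onememV, fun _ a ↦ h6 ((Set.mul_subset_mul_right Set.inter_subset_left) a)⟩

/-- In a locally profinite group, every open neighborhood of `1` contains a compact
open subgroup. -/
private lemma exists_compactOpen_subgroup {G : Type*} [Group G] [TopologicalSpace G]
    [IsTopologicalGroup G] [LocallyCompactSpace G] [TotallyDisconnectedSpace G]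
    {V : Set G} (hV : IsOpen V) (h1 : (1 : G) ∈ V) :
    ∃ K : Subgroup G, IsCompact (K : Set G) ∧ IsOpen (K : Set G) ∧ (K : Set G) ⊆ V := by
  obtain ⟨s, s_cpt, hs1, s_sub⟩ := exists_compact_subset hV h1
  obtain ⟨C, C_clopen, h1C, hCint⟩ :=
    loc_compact_Haus_tot_disc_of_zero_dim.mem_nhds_iff.1 (isOpen_interior.mem_nhds hs1)
  have C_cpt : IsCompact C := s_cpt.of_isClosed_subset C_clopen.1 (hCint.trans interior_subset)
  have hCV : C ⊆ V := (hCint.trans interior_subset).trans s_sub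
  obtain ⟨T, hT1, hCT⟩ := exist_mul_closure_nhd' C_cpt C_clopen.2
  set U : Set G := interior T ∩ (interior T)⁻¹ with hU_def
  have Uopen : IsOpen U := isOpen_interior.inter isOpen_interior.inv
  have h1U : (1 : G) ∈ U :=
    ⟨mem_interior_iff_mem_nhds.2 hT1, by
      simpa using mem_interior_iff_mem_nhds.2 hT1⟩
  have Uinv : U⁻¹ = U := by
    simp [hU_def, Set.inter_inv, Set.inter_comm]
  have UsubT : U ⊆ T := Set.inter_subset_left.trans interior_subset
  let S : Subgroup G := {
    carrier := ⋃ n, U ^ (n + 1)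
    mul_mem' := fun ha hb ↦ by
      rcases Set.mem_iUnion.mp ha with ⟨i, hi⟩
      rcases Set.mem_iUnion.mp hb with ⟨j, hj⟩
      apply Set.mem_iUnion.mpr
      use i + 1 + j
      rw [add_assoc, pow_add]
      exact Set.mul_mem_mul hi hj
    one_mem' := by
      apply Set.mem_iUnion.mpr
      use 0
      simpa using h1U
    inv_mem' := fun ha ↦ by
      rcases Set.mem_iUnion.mp ha with ⟨i, hi⟩
      apply Set.mem_iUnion.mpr
      use i
      rw [← Uinv]
      simpa only [inv_pow, Set.mem_inv, inv_inv] using hi }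
  have Sopen : IsOpen (S : Set G) := by
    refine isOpen_iUnion (fun n ↦ ?_)
    rw [pow_succ]
    exact Uopen.mul_left
  have mulCpow : ∀ n : ℕ, C * U ^ (n + 1) ⊆ C := by
    intro n
    induction' n with n ih
    · simpa using (Set.mul_subset_mul_left UsubT).trans hCT
    · rw [pow_succ, ← mul_assoc]
      exact (Set.mul_subset_mul_right ih).trans
        ((Set.mul_subset_mul_left UsubT).trans hCT)
  have SsubC : (S : Set G) ⊆ C := by
    refine Set.iUnion_subset fun i x hx ↦ mulCpow i ?_
    exact ⟨1, h1C, x, hx, one_mul x⟩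
  have Sclosed : IsClosed (S : Set G) := S.isClosed_of_isOpen Sopen
  exact ⟨S, C_cpt.of_isClosed_subset Sclosed SsubC, Sopen, SsubC.trans hCV⟩

/-- Let `G` be a locally profinite group and `P` a closed subgroup with
`G/P` compact, and let `W` be a smooth representation of `P` such that `Ind_P^G W` is
admissible (for each compact open subgroup `K ⊆ G`, the `K`-invariants — for the right
translation action — span a finite-dimensional space).  Then `W` is an admissible
representation of `P`: for each compact open subgroup `J ⊆ P`, the `J`-invariants of `W`
are contained in a finite-dimensional subspace. -/
theorem stmt14 (k G W : Type*) [Field k] [Group G] [TopologicalSpace G] [IsTopologicalGroup G]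
    [LocallyCompactSpace G] [TotallyDisconnectedSpace G]
    [AddCommGroup W] [Module k W]
    (P : Subgroup G) (hP : IsClosed (P : Set G)) [CompactSpace (G ⧸ P)]
    (ρ : Representation k ↥P W)
    (hsmooth : ∀ w : W, ∃ U : Subgroup G, IsOpen (U : Set G) ∧
      ∀ u : ↥P, (u : G) ∈ U → ρ u w = w)
    (hadm : ∀ K : Subgroup G, IsCompact (K : Set G) → IsOpen (K : Set G) →
      ∃ (n : ℕ) (v : Fin n → (G → W)), ∀ f : G → W, IsSmoothInd P ρ f →
        (∀ u ∈ K, ∀ g : G, f (g * u) = f g) → f ∈ Submodule.span k (Set.range v)) :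
    ∀ J : Subgroup ↥P, IsCompact (J : Set ↥P) → IsOpen (J : Set ↥P) →
      ∃ (n : ℕ) (v : Fin n → W), ∀ w : W, (∀ u ∈ J, ρ u w = w) →
        w ∈ Submodule.span k (Set.range v) := by
  intro J hJc hJo
  obtain ⟨V, hVopen, hVeq⟩ : ∃ V, IsOpen V ∧ Subtype.val ⁻¹' V = (J : Set ↥P) :=
    isOpen_induced_iff.mp hJo
  have h1V : (1 : G) ∈ V := by
    have : ((1 : ↥P) : G) ∈ V := by
      rw [← Set.mem_preimage, hVeq]; exact J.one_mem
    simpa using this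
  obtain ⟨K, hKc, hKo, hKV⟩ := exists_compactOpen_subgroup hVopen h1V
  obtain ⟨n, v, hv⟩ := hadm K hKc hKo
  refine ⟨n, fun i => v i 1, ?_⟩
  intro w hw
  -- elements of `P ∩ K` fix `w`
  have hfix : ∀ q : ↥P, (q : G) ∈ K → ρ q w = w := by
    intro q hq
    refine hw q ?_
    have : q ∈ Subtype.val ⁻¹' V := hKV hq
    rwa [hVeq] at this
  classical
  -- the function supported on `P * K` with `f (p * u) = ρ p w`
  set f : G → W := fun g =>
    if h : ∃ p : ↥P, (p : G)⁻¹ * g ∈ K then ρ h.choose w else 0 with hf_def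
  have hf : ∀ (p : ↥P) (g : G), (p : G)⁻¹ * g ∈ K → f g = ρ p w := by
    intro p g hpg
    have hex : ∃ p : ↥P, (p : G)⁻¹ * g ∈ K := ⟨p, hpg⟩
    have hq : ((hex.choose : ↥P) : G)⁻¹ * g ∈ K := hex.choose_spec
    have hmem : ((hex.choose⁻¹ * p : ↥P) : G) ∈ K := by
      have : ((hex.choose : ↥P) : G)⁻¹ * (p : G)
          = (((hex.choose : ↥P) : G)⁻¹ * g) * ((p : G)⁻¹ * g)⁻¹ := by group
      rw [Subgroup.coe_mul, Subgroup.coe_inv, this]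
      exact K.mul_mem hq (K.inv_mem hpg)
    have : ρ hex.choose w = ρ p w := by
      calc ρ hex.choose w = ρ hex.choose (ρ (hex.choose⁻¹ * p) w) := by rw [hfix _ hmem]
        _ = ρ (hex.choose * (hex.choose⁻¹ * p)) w := by
              conv_rhs => rw [map_mul, Module.End.mul_apply]
        _ = ρ p w := by group
    simp only [hf_def, dif_pos hex, this]
  have hf0 : ∀ g : G, (¬ ∃ p : ↥P, (p : G)⁻¹ * g ∈ K) → f g = 0 := by
    intro g hg; simp only [hf_def, dif_neg hg]
  -- K-invariance
  have hKinv : ∀ u ∈ K, ∀ g : G, f (g * u) = f g := by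
    intro u hu g
    by_cases h : ∃ p : ↥P, (p : G)⁻¹ * g ∈ K
    · obtain ⟨p, hp⟩ := h
      rw [hf p g hp, hf p (g * u) (by rw [← mul_assoc]; exact K.mul_mem hp hu)]
    · rw [hf0 g h, hf0 (g * u)]
      rintro ⟨p, hp⟩
      exact h ⟨p, by have := K.mul_mem hp (K.inv_mem hu); rwa [mul_assoc, mul_inv_cancel_right] at this⟩
  have hsm : IsSmoothInd P ρ f := by
    constructor
    · intro q g
      by_cases h : ∃ p : ↥P, (p : G)⁻¹ * g ∈ K
      · obtain ⟨p, hp⟩ := h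
        rw [hf p g hp, hf (q * p) ((q : G) * g)
          (by have : ((q * p : ↥P) : G)⁻¹ * ((q : G) * g) = (p : G)⁻¹ * g := by
                push_cast; group
              rwa [this]),
          map_mul, Module.End.mul_apply]
      · rw [hf0 g h, hf0 ((q : G) * g), map_zero]
        rintro ⟨p, hp⟩
        exact h ⟨q⁻¹ * p, by
          have : ((q⁻¹ * p : ↥P) : G)⁻¹ * g = (p : G)⁻¹ * ((q : G) * g) := by push_cast; group
          rwa [this]⟩
    · exact ⟨K, hKo, hKinv⟩
  have hfspan := hv f hsm hKinv
  have hw1 : f 1 = w := by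
    rw [hf 1 1 (by simpa using K.one_mem), map_one, Module.End.one_apply]
  -- evaluate at 1
  let L : (G → W) →ₗ[k] W := LinearMap.proj (R := k) (φ := fun _ : G => W) 1
  have : L f ∈ Submodule.map L (Submodule.span k (Set.range v)) :=
    Submodule.mem_map_of_mem hfspan
  rw [Submodule.map_span, ← Set.range_comp] at this
  have hLf : L f = w := hw1
  rw [hLf] at this
  exact this
end
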